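/- Fix k ∈ ℝ and γ > 0. Let S be a nonnegative, subadditive function on the class of open convex subsets of B₁ ⊆ ℝⁿ (subadditive: if A ⊆ A₁ ∪ … ∪ A_N with all sets open convex subsets of B₁, then S(A) ≤ Σⱼ S(Aⱼ)). Then there exists δ > 0, depending only on n and k, such that: if ρ^k S(B_{ρ/2}(x₀)) ≤ δ ρ^k S(B_ρ(x₀)) + γ for every ball B_ρ(x₀) ⊆ B₁, then S(B_{1/2}) ≤ Cγ, where C depends only on n and k. -/

import Mathlib

open Metric

lemma cover_exists_stmt12 (E : Type*) [NormedAddCommGroup E] [NormedSpace ℝ E]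
    [FiniteDimensional ℝ E] :
    ∃ (N : ℕ) (p : Fin N → E), 0 < N ∧ (∀ i, ‖p i‖ ≤ 1) ∧
      closedBall (0:E) 1 ⊆ ⋃ i, ball (p i) (1/4) := by
  have hc : IsCompact (closedBall (0:E) 1) := isCompact_closedBall _ _
  have hsub : closedBall (0:E) 1 ⊆ ⋃ i : closedBall (0:E) 1, ball (i : E) (1/4) := by
    intro y hy
    exact Set.mem_iUnion.mpr ⟨⟨y, hy⟩, mem_ball_self (by norm_num)⟩
  obtain ⟨t, ht⟩ := hc.elim_finite_subcover (fun i : closedBall (0:E) 1 => ball (i : E) (1/4))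
    (fun _ => isOpen_ball) hsub
  refine ⟨t.card, fun i => ((t.equivFin.symm i : closedBall (0:E) 1) : E), ?_, ?_, ?_⟩
  · rcases Finset.eq_empty_or_nonempty t with h | h
    · exfalso
      have := ht (mem_closedBall_self (by norm_num : (0:ℝ) ≤ 1))
      simp [h] at this
    · simpa [Finset.card_pos] using h
  · intro i
    have := ((t.equivFin.symm i : closedBall (0:E) 1)).2
    rwa [mem_closedBall, dist_zero_right] at this
  · intro y hy
    obtain ⟨c, hct, hyc⟩ := Set.mem_iUnion₂.mp (ht hy)
    refine Set.mem_iUnion.mpr ⟨t.equivFin ⟨c, hct⟩, ?_⟩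
    simpa using hyc

set_option maxHeartbeats 1000000 in
theorem stmt_12 (n : ℕ) (k : ℝ) :
    ∃ δ : ℝ, 0 < δ ∧ ∃ C : ℝ, 0 < C ∧
      ∀ γ : ℝ, 0 < γ →
        ∀ S : Set (EuclideanSpace ℝ (Fin n)) → ℝ,
          (∀ A : Set (EuclideanSpace ℝ (Fin n)),
            IsOpen A → Convex ℝ A → A ⊆ ball (0 : EuclideanSpace ℝ (Fin n)) 1 →
            0 ≤ S A) →
          (∀ (N : ℕ) (A : Set (EuclideanSpace ℝ (Fin n)))
              (F : Fin N → Set (EuclideanSpace ℝ (Fin n))),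
            IsOpen A → Convex ℝ A → A ⊆ ball (0 : EuclideanSpace ℝ (Fin n)) 1 →
            (∀ j, IsOpen (F j) ∧ Convex ℝ (F j) ∧
              F j ⊆ ball (0 : EuclideanSpace ℝ (Fin n)) 1) →
            A ⊆ ⋃ j, F j → S A ≤ ∑ j, S (F j)) →
          (∀ (x₀ : EuclideanSpace ℝ (Fin n)) (ρ : ℝ), 0 < ρ →
            ball x₀ ρ ⊆ ball (0 : EuclideanSpace ℝ (Fin n)) 1 →
            ρ ^ k * S (ball x₀ (ρ / 2)) ≤ δ * (ρ ^ k * S (ball x₀ ρ)) + γ) →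
          S (ball (0 : EuclideanSpace ℝ (Fin n)) (1 / 2)) ≤ C * γ := by
  set E := EuclideanSpace ℝ (Fin n)
  obtain ⟨N, p, hN, hp, hcov⟩ := cover_exists_stmt12 E
  set θ : ℝ := (2:ℝ) ^ (-(|k|+1)) with hθdef
  have hθpos : 0 < θ := Real.rpow_pos_of_pos two_pos _
  have h2k : (0:ℝ) < (2:ℝ) ^ k := Real.rpow_pos_of_pos two_pos k
  have h4k : (0:ℝ) < (4:ℝ) ^ k := Real.rpow_pos_of_pos (by norm_num) k
  have hNR : (0:ℝ) < (N:ℝ) := by exact_mod_cast hN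
  set δ : ℝ := θ / ((2:ℝ) ^ k * N) with hδdef
  have hδpos : 0 < δ := by positivity
  set C₀ : ℝ := (N:ℝ) * (4:ℝ) ^ k with hC₀def
  have hC₀pos : 0 < C₀ := by positivity
  refine ⟨δ, hδpos, 2 * C₀, by positivity, ?_⟩
  intro γ hγ S hS0 hSsub hmain
  -- monotonicity with respect to the full ball
  set M₀ : ℝ := S (ball (0:E) 1) with hM₀def
  have hM₀nonneg : 0 ≤ M₀ := hS0 _ isOpen_ball (convex_ball _ _) subset_rfl
  have hmono : ∀ A : Set E, IsOpen A → Convex ℝ A → A ⊆ ball (0:E) 1 → S A ≤ M₀ := by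
    intro A hAo hAc hAs
    have := hSsub 1 A (fun _ => ball (0:E) 1) hAo hAc hAs
      (fun _ => ⟨isOpen_ball, convex_ball _ _, subset_rfl⟩)
      (by intro y hy; exact Set.mem_iUnion.mpr ⟨0, hAs hy⟩)
    simpa using this
  -- key identities
  have hδθ : δ * ((2:ℝ) ^ k * (N:ℝ)) = θ := div_mul_cancel₀ θ (by positivity)
  have hθhalf : θ * (2:ℝ) ^ |k| = 1/2 := by
    rw [hθdef, ← Real.rpow_add two_pos]
    norm_num
  have hθle : θ ≤ 1/2 := by
    have : θ ≤ (2:ℝ) ^ (-1:ℝ) := by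
      apply Real.rpow_le_rpow_of_exponent_le one_le_two
      have := abs_nonneg k; linarith
    simpa [Real.rpow_neg_one] using this
  -- main induction on scales
  have key : ∀ j : ℕ, ∀ (x₀ : E) (ρ : ℝ), 0 < ρ → ρ ≤ 1 → ball x₀ ρ ⊆ ball (0:E) 1 →
      ρ ^ k * S (ball x₀ (ρ/2)) ≤ (1/2:ℝ)^j * ρ ^ (-|k|) * M₀ + 2 * C₀ * γ := by
    intro j
    induction j with
    | zero =>
      intro x₀ ρ hρ hρ1 hsub
      have hSle : S (ball x₀ (ρ/2)) ≤ M₀ :=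
        hmono _ isOpen_ball (convex_ball _ _)
          ((ball_subset_ball (by linarith)).trans hsub)
      have hSnn : 0 ≤ S (ball x₀ (ρ/2)) :=
        hS0 _ isOpen_ball (convex_ball _ _) ((ball_subset_ball (by linarith)).trans hsub)
      have hexp : ρ ^ k ≤ ρ ^ (-|k|) :=
        Real.rpow_le_rpow_of_exponent_ge hρ hρ1 (neg_abs_le k)
      have hρk : (0:ℝ) ≤ ρ ^ k := (Real.rpow_pos_of_pos hρ k).le
      have h1 : ρ ^ k * S (ball x₀ (ρ/2)) ≤ ρ ^ (-|k|) * M₀ :=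
        mul_le_mul hexp hSle hSnn (Real.rpow_nonneg hρ.le _)
      have h2 : 0 ≤ 2 * C₀ * γ := by positivity
      simpa using le_trans h1 (by linarith)
    | succ j ih =>
      intro x₀ ρ hρ hρ1 hsub
      set x : Fin N → E := fun i => x₀ + (ρ/2) • p i with hxdef
      have hdist : ∀ i, dist (x i) x₀ ≤ ρ/2 := by
        intro i
        rw [hxdef]
        simp only [dist_eq_norm, add_sub_cancel_left, norm_smul, Real.norm_eq_abs,
          abs_of_pos (by linarith : (0:ℝ) < ρ/2)]
        refine (dist_eq_norm (x₀ + (ρ/2) • p i) x₀).trans_le ?_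
        rw [add_sub_cancel_left, norm_smul, Real.norm_eq_abs,
          abs_of_pos (by linarith : (0:ℝ) < ρ/2)]
        calc ρ/2 * ‖p i‖ ≤ ρ/2 * 1 := by
              apply mul_le_mul_of_nonneg_left (hp i) (by linarith)
          _ = ρ/2 := by ring
      have hxsub : ∀ i, ball (x i) (ρ/2) ⊆ ball x₀ ρ := by
        intro i y hy
        rw [mem_ball] at *
        calc dist y x₀ ≤ dist y (x i) + dist (x i) x₀ := dist_triangle _ _ _
          _ < ρ/2 + ρ/2 := by have := hdist i; linarith
          _ = ρ := by ring
      have hxB1 : ∀ i, ball (x i) (ρ/2) ⊆ ball (0:E) 1 := fun i => (hxsub i).trans hsub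
      have hcover : ball x₀ (ρ/2) ⊆ ⋃ i, ball (x i) (ρ/8) := by
        intro y hy
        rw [mem_ball] at hy
        have hmem : (2/ρ) • (y - x₀) ∈ closedBall (0:E) 1 := by
          rw [mem_closedBall, dist_zero_right, norm_smul, Real.norm_eq_abs,
            abs_of_pos (by positivity : (0:ℝ) < 2/ρ)]
          rw [dist_eq_norm] at hy
          calc 2/ρ * ‖y - x₀‖ ≤ 2/ρ * (ρ/2) := by
                apply mul_le_mul_of_nonneg_left hy.le (by positivity)
            _ = 1 := by field_simp
        obtain ⟨i, hi⟩ := Set.mem_iUnion.mp (hcov hmem)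
        refine Set.mem_iUnion.mpr ⟨i, ?_⟩
        rw [mem_ball] at hi ⊢
        have hkey : y - x i = (ρ/2) • ((2/ρ) • (y - x₀) - p i) := by
          rw [hxdef]
          rw [smul_sub, smul_smul]
          have : ρ/2 * (2/ρ) = 1 := by field_simp
          rw [this, one_smul]
          abel_nf
          rw [sub_add_eq_sub_sub]
        rw [dist_eq_norm, hkey, norm_smul, Real.norm_eq_abs,
          abs_of_pos (by linarith : (0:ℝ) < ρ/2)]
        rw [dist_eq_norm] at hi
        calc ρ/2 * ‖(2/ρ) • (y - x₀) - p i‖ < ρ/2 * (1/4) := by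
              apply mul_lt_mul_of_pos_left hi (by linarith)
          _ = ρ/8 := by ring
      -- subadditivity
      have hsubadd : S (ball x₀ (ρ/2)) ≤ ∑ i, S (ball (x i) (ρ/8)) := by
        apply hSsub N (ball x₀ (ρ/2)) (fun i => ball (x i) (ρ/8)) isOpen_ball
          (convex_ball _ _) ((ball_subset_ball (by linarith)).trans hsub)
          (fun i => ⟨isOpen_ball, convex_ball _ _,
            (ball_subset_ball (by linarith)).trans (hxB1 i)⟩) hcover
      -- per-term estimate
      set B : ℝ := (1/2:ℝ)^j * (ρ/2) ^ (-|k|) * M₀ + 2 * C₀ * γ with hBdef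
      have hterm : ∀ i, ρ ^ k * S (ball (x i) (ρ/8)) ≤ δ * (2:ℝ)^k * B + (4:ℝ)^k * γ := by
        intro i
        have h₁ := hmain (x i) (ρ/4) (by linarith)
          ((ball_subset_ball (by linarith)).trans (hxB1 i))
        have h₂ := ih (x i) (ρ/2) (by linarith) (by linarith) (hxB1 i)
        rw [show ρ/4/2 = ρ/8 by ring] at h₁
        rw [show ρ/2/2 = ρ/4 by ring] at h₂
        have e4 : ρ ^ k = (4:ℝ)^k * (ρ/4) ^ k := by
          rw [Real.div_rpow hρ.le (by norm_num : (0:ℝ) ≤ 4)]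
          field_simp
        have e2 : ρ ^ k = (2:ℝ)^k * (ρ/2) ^ k := by
          rw [Real.div_rpow hρ.le (by norm_num : (0:ℝ) ≤ 2)]
          field_simp
        calc ρ ^ k * S (ball (x i) (ρ/8))
            = (4:ℝ)^k * ((ρ/4) ^ k * S (ball (x i) (ρ/8))) := by rw [e4]; ring
          _ ≤ (4:ℝ)^k * (δ * ((ρ/4) ^ k * S (ball (x i) (ρ/4))) + γ) := by
              apply mul_le_mul_of_nonneg_left h₁ h4k.le
          _ = δ * (2:ℝ)^k * ((ρ/2) ^ k * S (ball (x i) (ρ/4))) + (4:ℝ)^k * γ := by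
              have h44 : (4:ℝ)^k * (ρ/4) ^ k = (2:ℝ)^k * (ρ/2) ^ k := by
                rw [← e4, ← e2]
              linear_combination (δ * S (ball (x i) (ρ/4))) * h44
          _ ≤ δ * (2:ℝ)^k * B + (4:ℝ)^k * γ := by
              have hδ2k : (0:ℝ) ≤ δ * (2:ℝ)^k := by positivity
              rw [hBdef]
              have := mul_le_mul_of_nonneg_left h₂ hδ2k
              linarith
      -- sum up
      have hsum : ρ ^ k * S (ball x₀ (ρ/2)) ≤ (N:ℝ) * (δ * (2:ℝ)^k * B + (4:ℝ)^k * γ) := by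
        have hρk : (0:ℝ) ≤ ρ ^ k := (Real.rpow_pos_of_pos hρ k).le
        calc ρ ^ k * S (ball x₀ (ρ/2)) ≤ ρ ^ k * ∑ i, S (ball (x i) (ρ/8)) :=
              mul_le_mul_of_nonneg_left hsubadd hρk
          _ = ∑ i, ρ ^ k * S (ball (x i) (ρ/8)) := by rw [Finset.mul_sum]
          _ ≤ ∑ _i : Fin N, (δ * (2:ℝ)^k * B + (4:ℝ)^k * γ) :=
              Finset.sum_le_sum (fun i _ => hterm i)
          _ = (N:ℝ) * (δ * (2:ℝ)^k * B + (4:ℝ)^k * γ) := by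
              rw [Finset.sum_const, Finset.card_univ, Fintype.card_fin, nsmul_eq_mul]
      -- final arithmetic
      have eneg : (ρ/2) ^ (-|k|) = (2:ℝ) ^ |k| * ρ ^ (-|k|) := by
        rw [Real.div_rpow hρ.le (by norm_num : (0:ℝ) ≤ 2), div_eq_mul_inv,
          ← Real.rpow_neg (by norm_num : (0:ℝ) ≤ 2), neg_neg]
        ring
      have hNδ : (N:ℝ) * (δ * (2:ℝ)^k) = θ := by rw [← hδθ]; ring
      calc ρ ^ k * S (ball x₀ (ρ/2)) ≤ (N:ℝ) * (δ * (2:ℝ)^k * B + (4:ℝ)^k * γ) := hsum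
        _ = θ * B + C₀ * γ := by rw [hC₀def, ← hNδ]; ring
        _ = θ * (2:ℝ)^|k| * ((1/2:ℝ)^j * ρ ^ (-|k|) * M₀) + (2 * θ + 1) * (C₀ * γ) := by
            rw [hBdef, eneg]; ring
        _ = (1/2:ℝ) * ((1/2:ℝ)^j * ρ ^ (-|k|) * M₀) + (2 * θ + 1) * (C₀ * γ) := by
            rw [hθhalf]
        _ ≤ (1/2:ℝ)^(j+1) * ρ ^ (-|k|) * M₀ + 2 * C₀ * γ := by
            have h1 : (1/2:ℝ) * ((1/2:ℝ)^j * ρ ^ (-|k|) * M₀) = (1/2:ℝ)^(j+1) * ρ ^ (-|k|) * M₀ := by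
              rw [pow_succ]; ring
            have h2 : (2 * θ + 1) * (C₀ * γ) ≤ 2 * (C₀ * γ) := by
              have : (0:ℝ) < C₀ * γ := by positivity
              nlinarith
            rw [h1]; linarith
  -- conclude
  have hfin : ∀ j : ℕ, S (ball (0:E) (1/2)) ≤ (1/2:ℝ)^j * M₀ + 2 * C₀ * γ := by
    intro j
    have := key j 0 1 one_pos le_rfl subset_rfl
    simpa [Real.one_rpow] using this
  have hSnn : 0 ≤ S (ball (0:E) (1/2)) :=
    hS0 _ isOpen_ball (convex_ball _ _) (ball_subset_ball (by norm_num))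
  refine le_of_forall_pos_le_add ?_
  intro ε hε
  obtain ⟨j, hj⟩ := exists_pow_lt_of_lt_one (show (0:ℝ) < ε / (M₀ + 1) by positivity)
    (by norm_num : (1/2:ℝ) < 1)
  have hlt : (1/2:ℝ)^j * M₀ < ε := by
    have hpow : (0:ℝ) < (1/2:ℝ)^j := by positivity
    have := mul_lt_mul_of_pos_right hj (show (0:ℝ) < M₀ + 1 by linarith)
    rw [div_mul_cancel₀ _ (by linarith : (M₀:ℝ) + 1 ≠ 0)] at this
    nlinarith
  have := hfin j
  linarith
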